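/- The function g is strictly increasing on ℝ and is a bijection from ℝ onto ℝ (in particular g is invertible). -/
import Mathlib


open Real Filter Set

theorem g_strictMono_bijective (N : ℕ) (hN : 2 ≤ N) (α : ℝ) (hα : 1 / 2 < α)
    (g : ℝ → ℝ) (hg_diff : Differentiable ℝ g) (hg_zero : g 0 = 0)
    (hg_odd : ∀ t : ℝ, g (-t) = -g t)
    (hg_deriv : ∀ t : ℝ, deriv g t =
      (1 + (2 * α) ^ ((N : ℝ) - 1) * |g t| ^ ((N : ℝ) * (2 * α - 1))) ^ (-(1 / (N : ℝ))))
    : StrictMono g ∧ Function.Bijective g := by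
  have h2α : (0:ℝ) < 2 * α := by linarith
  have hNpos : (0:ℝ) < (N:ℝ) := by exact_mod_cast Nat.cast_pos.mpr (by omega)
  have hbase : ∀ t : ℝ, (0:ℝ) < 1 + (2 * α) ^ ((N : ℝ) - 1) * |g t| ^ ((N : ℝ) * (2 * α - 1)) := by
    intro t
    have h1 : (0:ℝ) ≤ (2 * α) ^ ((N : ℝ) - 1) := Real.rpow_nonneg h2α.le _
    have h2 : (0:ℝ) ≤ |g t| ^ ((N : ℝ) * (2 * α - 1)) := Real.rpow_nonneg (abs_nonneg _) _
    nlinarith [mul_nonneg h1 h2]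
  have hpos : ∀ t : ℝ, 0 < deriv g t := by
    intro t
    rw [hg_deriv t]
    exact Real.rpow_pos_of_pos (hbase t) _
  have hmono : StrictMono g := strictMono_of_deriv_pos hpos
  refine ⟨hmono, hmono.injective, ?_⟩
  -- unboundedness above
  have key : ∀ y : ℝ, 0 < y → ∃ t : ℝ, y ≤ g t := by
    intro y hy
    by_contra h
    push_neg at h
    set M : ℝ := 1 + (2 * α) ^ ((N : ℝ) - 1) * y ^ ((N : ℝ) * (2 * α - 1)) with hM
    have hMpos : 0 < M := by
      have h1 : (0:ℝ) ≤ (2 * α) ^ ((N : ℝ) - 1) := Real.rpow_nonneg h2α.le _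
      have h2 : (0:ℝ) ≤ y ^ ((N : ℝ) * (2 * α - 1)) := Real.rpow_nonneg hy.le _
      nlinarith [mul_nonneg h1 h2]
    set ε : ℝ := M ^ (-(1 / (N : ℝ))) with hε
    have hεpos : 0 < ε := Real.rpow_pos_of_pos hMpos _
    have hderiv_ge : ∀ t : ℝ, 0 ≤ t → ε ≤ deriv g t := by
      intro t ht
      have hgt0 : 0 ≤ g t := by
        have := hmono.monotone ht
        rwa [hg_zero] at this
      have habs : |g t| ≤ y := by
        rw [abs_of_nonneg hgt0]; exact (h t).le
      have hle : |g t| ^ ((N : ℝ) * (2 * α - 1)) ≤ y ^ ((N : ℝ) * (2 * α - 1)) := by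
        apply Real.rpow_le_rpow (abs_nonneg _) habs
        nlinarith
      have hbl : 1 + (2 * α) ^ ((N : ℝ) - 1) * |g t| ^ ((N : ℝ) * (2 * α - 1)) ≤ M := by
        have h1 : (0:ℝ) ≤ (2 * α) ^ ((N : ℝ) - 1) := Real.rpow_nonneg h2α.le _
        nlinarith
      rw [hg_deriv t]
      exact Real.rpow_le_rpow_of_nonpos (hbase t) hbl (neg_nonpos.mpr (by positivity))
    -- h(t) = g t - ε t is monotone on [0, ∞)
    have hmon2 : MonotoneOn (fun t => g t - ε * t) (Ici (0:ℝ)) := by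
      apply monotoneOn_of_deriv_nonneg (convex_Ici 0)
      · exact (hg_diff.sub ((differentiable_id.const_mul ε))).continuous.continuousOn
      · exact (hg_diff.sub ((differentiable_id.const_mul ε))).differentiableOn
      · intro x hx
        rw [interior_Ici] at hx
        have hd1 : HasDerivAt (fun t : ℝ => g t - ε * t) (deriv g x - ε * 1) x :=
          (hg_diff x).hasDerivAt.sub ((hasDerivAt_id x).const_mul ε)
        have : deriv (fun t => g t - ε * t) x = deriv g x - ε := by
          rw [hd1.deriv]; ring
        rw [this]
        have := hderiv_ge x (le_of_lt hx)
        linarith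
    have hgrow : y ≤ g (y / ε) := by
      have h0 : (0:ℝ) ∈ Ici (0:ℝ) := mem_Ici.mpr le_rfl
      have hyε : (0:ℝ) ≤ y / ε := by positivity
      have := hmon2 h0 hyε hyε
      simp only [hg_zero, mul_zero, sub_zero] at this
      have hεy : ε * (y / ε) = y := by field_simp
      nlinarith [this]
    exact absurd hgrow (not_le.mpr (h _))
  intro y
  obtain ⟨b, hb⟩ := key (|y| + 1) (by positivity)
  have hbpos : 0 < b := by
    by_contra hb0
    push_neg at hb0
    have := hmono.monotone hb0
    rw [hg_zero] at this
    have := abs_nonneg y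
    linarith
  have hlow : g (-b) ≤ y := by
    rw [hg_odd]
    have : -y ≤ |y| + 1 := by cases abs_cases y <;> linarith
    linarith
  have hhigh : y ≤ g b := by
    have : y ≤ |y| + 1 := by cases abs_cases y <;> linarith
    linarith
  have hab : -b ≤ b := by linarith
  have := intermediate_value_Icc hab (hg_diff.continuous.continuousOn)
  obtain ⟨x, _, hx⟩ := this ⟨hlow, hhigh⟩
  exact ⟨x, hx⟩
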